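/- Let m ≥ 1, m₀ > 0, J₀ ∈ ℝ^{3×3}, and let M, J, N, L₁^M, R₁^M, L₁^J, R₁^J ∈ ℝ^{3×3}, C^M, C^J, W₁^M, W₁^J ∈ ℝ^{3×m} satisfy: M, J, L₁^M and R₁^J are diagonal; N, R₁^M and L₁^J have nonzero entries at most in positions (2,3) and (3,2); the first columns satisfy C^M e₁ = (C^M)₁₁ e₁, C^J e₁ = 0, W₁^M e₁ = (W₁^M)₁₁ e₁, W₁^J e₁ = 0. Assume the 6×6 matrix 𝒥 = [[m₀ Id + M, N], [Nᵀ, J₀ + J]] is invertible and m₀ + M₁₁ ≠ 0. Set α = −(C^M)₁₁/(m₀+M₁₁), β = −(L₁^M)₁₁/(m₀+M₁₁), γ = −(W₁^M)₁₁/(m₀+M₁₁). Let h₁, l₁, w₁ ∈ C¹([0,T]; ℝ) satisfy h₁' = l₁ and l₁' = α w₁' + β l₁ w₁ + γ w₁². Then, setting h = (h₁,0,0), q⃗ = (0,0,0), l = (l₁,0,0), r = (0,0,0) and w = (w₁,0,…,0) ∈ ℝ^m, the tuple (h, q⃗, l, r, w) solves the system: h' = (1−‖q⃗‖²) l + 2√(1−‖q⃗‖²)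 q⃗ × l + (l·q⃗) q⃗ − q⃗ × l × q⃗, q⃗' = ½(√(1−‖q⃗‖²) r + q⃗ × r), (l, r)' = 𝒥⁻¹ (C w' + F(l,r,w)). -/

import Mathlib

noncomputable section

open Matrix

/-- The skew-symmetric matrix `S(y)` with `S(y) x = y × x`. -/
def Smat (y : Fin 3 → ℝ) : Matrix (Fin 3) (Fin 3) ℝ :=
  !![0, -y 2, y 1; y 2, 0, -y 0; -y 1, y 0, 0]

/-- The virtual inertia matrix `𝒥 = [[m₀ Id + M, N], [Nᵀ, J₀ + J]]`. -/
def Jcal (m₀ : ℝ) (J₀ M J N : Matrix (Fin 3) (Fin 3) ℝ) :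
    Matrix (Fin 3 ⊕ Fin 3) (Fin 3 ⊕ Fin 3) ℝ :=
  Matrix.fromBlocks (m₀ • (1 : Matrix (Fin 3) (Fin 3) ℝ) + M) N Nᵀ (J₀ + J)

/-- Vertical stacking of two `3 × m` matrices into a `6 × m` matrix. -/
def stackM {m : ℕ} (A B : Matrix (Fin 3) (Fin m) ℝ) :
    Matrix (Fin 3 ⊕ Fin 3) (Fin m) ℝ :=
  Matrix.of fun i j => Sum.elim (fun a => A a j) (fun a => B a j) i

/-- The control matrix `C = −[Cᴹ; Cᴶ]`. -/
def Cmat {m : ℕ} (CM CJ : Matrix (Fin 3) (Fin m) ℝ) :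
    Matrix (Fin 3 ⊕ Fin 3) (Fin m) ℝ := -(stackM CM CJ)

/-- The quadratic map
`F(l,r,w) = −[[S(r),0],[S(l),S(r)]] (𝒥 (l;r) − C w)
  − Σ_p w_p (Lᴹ_p l + Rᴹ_p r + Wᴹ_p w ; Lᴶ_p l + Rᴶ_p r + Wᴶ_p w)`. -/
def Fquad {m : ℕ} (m₀ : ℝ) (J₀ M J N : Matrix (Fin 3) (Fin 3) ℝ)
    (CM CJ : Matrix (Fin 3) (Fin m) ℝ)
    (LM RM LJ RJ : Fin m → Matrix (Fin 3) (Fin 3) ℝ)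
    (WM WJ : Fin m → Matrix (Fin 3) (Fin m) ℝ)
    (l r : Fin 3 → ℝ) (w : Fin m → ℝ) : Fin 3 ⊕ Fin 3 → ℝ :=
  -((Matrix.fromBlocks (Smat r) 0 (Smat l) (Smat r)).mulVec
      ((Jcal m₀ J₀ M J N).mulVec (Sum.elim l r) - (Cmat CM CJ).mulVec w))
  - ∑ p : Fin m, w p • Sum.elim
      ((LM p).mulVec l + (RM p).mulVec r + (WM p).mulVec w)
      ((LJ p).mulVec l + (RJ p).mulVec r + (WJ p).mulVec w)

/-- Right-hand side of the equation for `h`: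
`(1−‖q‖²) l + 2√(1−‖q‖²) q × l + (l·q) q − q × (l × q)`. -/
def rhsH (q l : Fin 3 → ℝ) : Fin 3 → ℝ :=
  (1 - ∑ i, q i ^ 2) • l
    + (2 * Real.sqrt (1 - ∑ i, q i ^ 2)) • crossProduct q l
    + (∑ i, l i * q i) • q
    - crossProduct q (crossProduct l q)

/-- Right-hand side of the equation for `q⃗`: `½(√(1−‖q‖²) r + q × r)`. -/
def rhsQ (q r : Fin 3 → ℝ) : Fin 3 → ℝ :=
  (1 / 2 : ℝ) • (Real.sqrt (1 - ∑ i, q i ^ 2) • r + crossProduct q r)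

/-- Lemma 4.1, the toy problem. Under the symmetry-induced
sparsity assumptions on the matrices, if `h₁' = l₁` and
`l₁' = α w₁' + β l₁ w₁ + γ w₁²` on `[0,T]`, then
`(h,q⃗,l,r,w) = ((h₁,0,0), 0, (l₁,0,0), 0, (w₁,0,…,0))` solves the
underwater-vehicle control system. -/
theorem stmt_1 (m : ℕ) (hm : 0 < m) (T : ℝ)
    (m₀ : ℝ) (hm₀ : 0 < m₀) (J₀ M J N : Matrix (Fin 3) (Fin 3) ℝ)
    (CM CJ : Matrix (Fin 3) (Fin m) ℝ)
    (LM RM LJ RJ : Fin m → Matrix (Fin 3) (Fin 3) ℝ)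
    (WM WJ : Fin m → Matrix (Fin 3) (Fin m) ℝ)
    -- diagonality of M, J, L₁ᴹ, R₁ᴶ
    (hM : M.IsDiag) (hJ : J.IsDiag)
    (hLM1 : (LM ⟨0, hm⟩).IsDiag) (hRJ1 : (RJ ⟨0, hm⟩).IsDiag)
    -- N, R₁ᴹ, L₁ᴶ have nonzero entries at most in positions (2,3) and (3,2)
    (hN : ∀ i j : Fin 3, ¬(i = 1 ∧ j = 2) → ¬(i = 2 ∧ j = 1) → N i j = 0)
    (hRM1 : ∀ i j : Fin 3, ¬(i = 1 ∧ j = 2) → ¬(i = 2 ∧ j = 1) → RM ⟨0, hm⟩ i j = 0)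
    (hLJ1 : ∀ i j : Fin 3, ¬(i = 1 ∧ j = 2) → ¬(i = 2 ∧ j = 1) → LJ ⟨0, hm⟩ i j = 0)
    -- structure of the first columns of Cᴹ, Cᴶ, W₁ᴹ, W₁ᴶ
    (hCM : ∀ i : Fin 3, i ≠ 0 → CM i ⟨0, hm⟩ = 0)
    (hCJ : ∀ i : Fin 3, CJ i ⟨0, hm⟩ = 0)
    (hWM : ∀ i : Fin 3, i ≠ 0 → WM ⟨0, hm⟩ i ⟨0, hm⟩ = 0)
    (hWJ : ∀ i : Fin 3, WJ ⟨0, hm⟩ i ⟨0, hm⟩ = 0)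
    -- invertibility of 𝒥 and nondegeneracy of m₀ + M₁₁
    (hinv : IsUnit (Jcal m₀ J₀ M J N)) (hM11 : m₀ + M 0 0 ≠ 0)
    -- the coefficients α, β, γ
    (α β γ : ℝ)
    (hα : α = -(CM 0 ⟨0, hm⟩) / (m₀ + M 0 0))
    (hβ : β = -((LM ⟨0, hm⟩) 0 0) / (m₀ + M 0 0))
    (hγ : γ = -((WM ⟨0, hm⟩) 0 ⟨0, hm⟩) / (m₀ + M 0 0))
    -- the scalar trajectory (h₁, l₁, w₁) of class C¹ on [0,T]
    (h₁ l₁ w₁ w₁' : ℝ → ℝ)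
    (hw₁c : ContinuousOn w₁' (Set.Icc 0 T))
    (hw₁ : ∀ t ∈ Set.Icc (0:ℝ) T, HasDerivAt w₁ (w₁' t) t)
    (hh₁ : ∀ t ∈ Set.Icc (0:ℝ) T, HasDerivAt h₁ (l₁ t) t)
    (hl₁ : ∀ t ∈ Set.Icc (0:ℝ) T,
      HasDerivAt l₁ (α * w₁' t + β * l₁ t * w₁ t + γ * w₁ t ^ 2) t) :
    -- conclusion: the tuple (h, q⃗, l, r, w) solves the control system
    ∀ t ∈ Set.Icc (0:ℝ) T,
      (∀ i : Fin 3, HasDerivAt (fun s => (![h₁ s, 0, 0] : Fin 3 → ℝ) i)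
        (rhsH (0 : Fin 3 → ℝ) ![l₁ t, 0, 0] i) t) ∧
      (∀ i : Fin 3, HasDerivAt (fun _ : ℝ => (0 : ℝ))
        (rhsQ (0 : Fin 3 → ℝ) (0 : Fin 3 → ℝ) i) t) ∧
      (∀ j : Fin m, HasDerivAt (fun s => (Pi.single (⟨0, hm⟩ : Fin m) (w₁ s) : Fin m → ℝ) j)
        ((Pi.single (⟨0, hm⟩ : Fin m) (w₁' t) : Fin m → ℝ) j) t) ∧
      (∀ i : Fin 3 ⊕ Fin 3,
        HasDerivAt (fun s => Sum.elim (![l₁ s, 0, 0] : Fin 3 → ℝ) (0 : Fin 3 → ℝ) i)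
          (((Jcal m₀ J₀ M J N)⁻¹).mulVec
            ((Cmat CM CJ).mulVec (Pi.single (⟨0, hm⟩ : Fin m) (w₁' t))
              + Fquad m₀ J₀ M J N CM CJ LM RM LJ RJ WM WJ
                  ![l₁ t, 0, 0] (0 : Fin 3 → ℝ)
                  (Pi.single (⟨0, hm⟩ : Fin m) (w₁ t))) i) t) := by
  intro t ht
  refine ⟨?_, ?_, ?_, ?_⟩
  · intro i
    have hr : rhsH (0 : Fin 3 → ℝ) ![l₁ t, 0, 0] = ![l₁ t, 0, 0] := by
      funext i
      fin_cases i <;>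
        simp [rhsH, crossProduct, Fin.sum_univ_three]
    rw [hr]
    fin_cases i
    · simpa using hh₁ t ht
    · simpa using hasDerivAt_const t (0 : ℝ)
    · simpa using hasDerivAt_const t (0 : ℝ)
  · intro i
    have hr : rhsQ (0 : Fin 3 → ℝ) (0 : Fin 3 → ℝ) = 0 := by
      funext i
      fin_cases i <;> simp [rhsQ, crossProduct]
    rw [hr]
    simpa using hasDerivAt_const t (0 : ℝ)
  · intro j
    rcases eq_or_ne j (⟨0, hm⟩ : Fin m) with rfl | hj
    · simpa using hw₁ t ht
    · simp only [Pi.single_eq_of_ne hj]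
      simpa using hasDerivAt_const t (0 : ℝ)
  · have hdet : IsUnit (Jcal m₀ J₀ M J N).det := (Matrix.isUnit_iff_isUnit_det _).mp hinv
    set d : ℝ := α * w₁' t + β * l₁ t * w₁ t + γ * w₁ t ^ 2 with hd
    have hM' : ∀ i j : Fin 3, i ≠ j → M i j = 0 := fun i j h => hM h
    have hJ' : ∀ i j : Fin 3, i ≠ j → J i j = 0 := fun i j h => hJ h
    have hLM' : ∀ i j : Fin 3, i ≠ j → LM ⟨0, hm⟩ i j = 0 := fun i j h => hLM1 h
    have hRJ' : ∀ i j : Fin 3, i ≠ j → RJ ⟨0, hm⟩ i j = 0 := fun i j h => hRJ1 h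
    have hsum : ∀ (f : Fin m → Fin 3 ⊕ Fin 3 → ℝ) (i : Fin 3 ⊕ Fin 3),
        (∑ p : Fin m, (Pi.single (⟨0, hm⟩ : Fin m) (w₁ t) : Fin m → ℝ) p • f p) i
          = w₁ t * f ⟨0, hm⟩ i := by
      intro f i
      rw [Finset.sum_apply, Finset.sum_eq_single (⟨0, hm⟩ : Fin m)]
      · simp
      · intro b _ hb; simp [Pi.single_eq_of_ne hb]
      · simp
    have hsm : ∀ (g : Fin m → ℝ) (c : ℝ),
        (∑ x : Fin m, g x * (Pi.single (⟨0, hm⟩ : Fin m) c : Fin m → ℝ) x)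
          = g ⟨0, hm⟩ * c := by
      intro g c
      rw [Finset.sum_eq_single (⟨0, hm⟩ : Fin m)]
      · simp
      · intro b _ hb; simp [Pi.single_eq_of_ne hb]
      · simp
    have hmv : ∀ (A : Matrix (Fin 3) (Fin m) ℝ) (x : ℝ),
        A.mulVec (Pi.single (⟨0, hm⟩ : Fin m) x) = fun i => A i ⟨0, hm⟩ * x := by
      intro A x; rw [Matrix.mulVec_single]; funext i; simp
    have key : (Cmat CM CJ).mulVec (Pi.single (⟨0, hm⟩ : Fin m) (w₁' t))
        + Fquad m₀ J₀ M J N CM CJ LM RM LJ RJ WM WJ ![l₁ t, 0, 0] (0 : Fin 3 → ℝ)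
            (Pi.single (⟨0, hm⟩ : Fin m) (w₁ t))
        = (Jcal m₀ J₀ M J N).mulVec (Sum.elim ![d, 0, 0] (0 : Fin 3 → ℝ)) := by
      have hval : (m₀ + M 0 0) * d
          = -(CM 0 ⟨0, hm⟩) * w₁' t - (LM ⟨0, hm⟩ 0 0) * (l₁ t * w₁ t)
            - (WM ⟨0, hm⟩ 0 ⟨0, hm⟩) * w₁ t ^ 2 := by
        rw [hd, hα, hβ, hγ]; field_simp; ring
      funext i
      simp only [Pi.add_apply, Fquad, Cmat, stackM, Jcal, Smat, Pi.sub_apply, Pi.neg_apply,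
        Matrix.neg_mulVec, hmv, hsum, hsm]
      rcases i with a | a <;> fin_cases a <;>
        simp [Matrix.mulVec, dotProduct, Fin.sum_univ_three, Matrix.fromBlocks, hsm, Smat, Matrix.vecHead, Matrix.vecTail,
          hCJ, hWJ, hCM 1 (by decide), hCM 2 (by decide), hWM 1 (by decide), hWM 2 (by decide),
          hM' 0 1 (by decide), hM' 0 2 (by decide), hM' 1 0 (by decide), hM' 1 2 (by decide),
          hM' 2 0 (by decide), hM' 2 1 (by decide),
          hJ' 0 1 (by decide), hJ' 0 2 (by decide), hJ' 1 0 (by decide), hJ' 1 2 (by decide),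
          hJ' 2 0 (by decide), hJ' 2 1 (by decide),
          hLM' 0 1 (by decide), hLM' 0 2 (by decide), hLM' 1 0 (by decide),
          hLM' 1 2 (by decide), hLM' 2 0 (by decide), hLM' 2 1 (by decide),
          hRJ' 0 1 (by decide), hRJ' 0 2 (by decide), hRJ' 1 0 (by decide),
          hRJ' 1 2 (by decide), hRJ' 2 0 (by decide), hRJ' 2 1 (by decide),
          hN 0 0 (by decide) (by decide), hN 0 1 (by decide) (by decide),
          hN 0 2 (by decide) (by decide), hN 1 0 (by decide) (by decide),
          hN 1 1 (by decide) (by decide), hN 2 0 (by decide) (by decide),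
          hN 2 2 (by decide) (by decide),
          hRM1 0 0 (by decide) (by decide), hRM1 0 1 (by decide) (by decide),
          hRM1 0 2 (by decide) (by decide), hRM1 1 0 (by decide) (by decide),
          hRM1 1 1 (by decide) (by decide), hRM1 2 0 (by decide) (by decide),
          hRM1 2 2 (by decide) (by decide),
          hLJ1 0 0 (by decide) (by decide), hLJ1 0 1 (by decide) (by decide),
          hLJ1 0 2 (by decide) (by decide), hLJ1 1 0 (by decide) (by decide),
          hLJ1 1 1 (by decide) (by decide), hLJ1 2 0 (by decide) (by decide),
          hLJ1 2 2 (by decide) (by decide)]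
      · linarith [hval]
    intro i
    rw [key, Matrix.mulVec_mulVec, Matrix.nonsing_inv_mul _ hdet, Matrix.one_mulVec]
    rcases i with a | a
    · fin_cases a
      · simpa [hd] using hl₁ t ht
      · simpa using hasDerivAt_const t (0 : ℝ)
      · simpa using hasDerivAt_const t (0 : ℝ)
    · fin_cases a <;> simpa using hasDerivAt_const t (0 : ℝ)

end
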